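/- arXiv:1712.10319 — 3 statements merged into one kernel-verified Lean document; each statement's English description precedes it below -/
import Mathlib

section
/- Let k₁,…,kₙ ∈ ℝ, μ ∈ ℝ with 1 − μkᵢ ≠ 0 for all i, and A(μ) = ∏ᵢ(1 − μkᵢ). Then for each 1 ≤ s ≤ n, the s-th derivative of A at μ satisfies (−1)^s/(s!·A(μ)) · A^{(s)}(μ) = e_s(k₁/(1−μk₁), …, kₙ/(1−μkₙ)), the s-th elementary symmetric polynomial of the transformed values. -/
open Polynomial

lemma iteratedDeriv_eval (s : ℕ) : ∀ (p : Polynomial ℝ) (x : ℝ),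
    iteratedDeriv s (fun t => p.eval t) x = (derivative^[s] p).eval x := by
  induction s with
  | zero => intro p x; simp
  | succ m ih =>
    intro p x
    rw [iteratedDeriv_succ']
    have : deriv (fun t => p.eval t) = fun t => (derivative p).eval t := by
      funext t; exact Polynomial.deriv (𝕜 := ℝ) p
    rw [this, ih, Function.iterate_succ_apply]

lemma coeff_prod_one_add {ι : Type*} [DecidableEq ι] (u : Finset ι) (c : ι → ℝ) :
    ∀ s : ℕ, (∏ i ∈ u, (1 + Polynomial.C (c i) * Polynomial.X)).coeff s
      = ∑ S ∈ u.powersetCard s, ∏ i ∈ S, c i := by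
  induction u using Finset.induction_on with
  | empty =>
    intro s
    cases s with
    | zero => simp
    | succ m =>
      rw [Finset.prod_empty, Polynomial.coeff_one]
      rw [Finset.powersetCard_eq_empty.mpr (by simp)]
      simp
  | @insert a u ha ih =>
    intro s
    rw [Finset.prod_insert ha, add_mul, one_mul]
    cases s with
    | zero =>
      rw [Polynomial.coeff_add, Polynomial.mul_coeff_zero]
      simp [ih 0]
    | succ m =>
      rw [Polynomial.coeff_add, mul_assoc, Polynomial.coeff_C_mul, Polynomial.coeff_X_mul,
        ih (m+1), ih m, Finset.powersetCard_succ_insert ha, Finset.sum_union, Finset.sum_image]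
      · congr 1
        rw [Finset.mul_sum]
        refine Finset.sum_congr rfl fun S hS => ?_
        have haS : a ∉ S := fun h => ha ((Finset.mem_powersetCard.mp hS).1 h)
        rw [Finset.prod_insert haS]
      · intro S hS T hT h
        have haS : a ∉ S := fun h' => ha ((Finset.mem_powersetCard.mp hS).1 h')
        have haT : a ∉ T := fun h' => ha ((Finset.mem_powersetCard.mp hT).1 h')
        rw [← Finset.erase_insert haS, ← Finset.erase_insert haT, h]
      · rw [Finset.disjoint_right]
        rintro S hS hS'
        obtain ⟨T, hT, rfl⟩ := Finset.mem_image.mp hS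
        exact ha ((Finset.mem_powersetCard.mp hS').1 (Finset.mem_insert_self a T))

/-- The `r`-th elementary symmetric function of `k₁, …, kₙ`. -/
def esymm (n : ℕ) (k : Fin n → ℝ) (r : ℕ) : ℝ :=
  ∑ S ∈ Finset.univ.powersetCard r, ∏ i ∈ S, k i

theorem iteratedDeriv_A_eq_esymm_of_transformed (n : ℕ) (k : Fin n → ℝ) (μ : ℝ)
    (hμ : ∀ i, 1 - μ * k i ≠ 0) (A : ℝ → ℝ) (hA : A = fun t => ∏ i, (1 - t * k i))
    (s : ℕ) (hs1 : 1 ≤ s) (hsn : s ≤ n) :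
    (-1 : ℝ) ^ s / (s.factorial * A μ) * iteratedDeriv s A μ
      = esymm n (fun i => k i / (1 - μ * k i)) s := by
  set P : Polynomial ℝ := ∏ i : Fin n, (1 - C (k i) * X) with hP
  have hAP : A = fun t => P.eval t := by
    rw [hA]; funext t
    rw [hP, Polynomial.eval_prod]
    exact Finset.prod_congr rfl fun i _ => by rw [Polynomial.eval_sub, Polynomial.eval_one, Polynomial.eval_mul, Polynomial.eval_C, Polynomial.eval_X, mul_comm]
  have hstep1 : iteratedDeriv s A μ = (derivative^[s] P).eval μ := by
    rw [hAP, iteratedDeriv_eval]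
  have hstep2 : (derivative^[s] P).eval μ = (s.factorial : ℝ) * (taylor μ P).coeff s := by
    have h2 := congrFun (Polynomial.factorial_smul_hasseDeriv (R := ℝ) s) P
    rw [← h2, LinearMap.smul_apply, Polynomial.taylor_coeff]
    simp [nsmul_eq_mul]
  have hfac : ∀ i : Fin n, (1 - C (k i) * X).comp (X + C μ)
      = C (1 - μ * k i) * (1 + C (-(k i / (1 - μ * k i))) * X) := by
    intro i
    have h := hμ i
    have key : (1 - μ * k i) * (-(k i / (1 - μ * k i))) = -(k i) := by
      field_simp
    rw [mul_add, mul_one, ← mul_assoc, ← C_mul, key, sub_comp, one_comp, mul_comp, C_comp, X_comp,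
      C_sub, C_mul, C_neg, C_1]
    ring
  have hAμ : A μ = ∏ i, (1 - μ * k i) := by rw [hA]
  have htaylor : taylor μ P = C (A μ) * ∏ i : Fin n, (1 + C (-(k i / (1 - μ * k i))) * X) := by
    rw [Polynomial.taylor_apply, hP, Polynomial.prod_comp, hAμ]
    rw [Finset.prod_congr rfl (fun i _ => hfac i), Finset.prod_mul_distrib]
    congr 1
    rw [← map_prod]
  have hcoeff : (taylor μ P).coeff s
      = A μ * ((-1 : ℝ) ^ s * esymm n (fun i => k i / (1 - μ * k i)) s) := by
    rw [htaylor, Polynomial.coeff_C_mul, coeff_prod_one_add]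
    congr 1
    rw [esymm, Finset.mul_sum]
    refine Finset.sum_congr rfl fun S hS => ?_
    have hcard : S.card = s := (Finset.mem_powersetCard.mp hS).2
    calc ∏ i ∈ S, -(k i / (1 - μ * k i))
        = ∏ i ∈ S, (-1) * (k i / (1 - μ * k i)) := by simp
      _ = (-1 : ℝ) ^ s * ∏ i ∈ S, k i / (1 - μ * k i) := by
          rw [Finset.prod_mul_distrib, Finset.prod_const, hcard]
  have hA0 : A μ ≠ 0 := by
    rw [hAμ]; exact Finset.prod_ne_zero_iff.mpr fun i _ => hμ i
  have hs0 : (s.factorial : ℝ) * A μ ≠ 0 :=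
    mul_ne_zero (Nat.cast_ne_zero.mpr s.factorial_ne_zero) hA0
  rw [hstep1, hstep2, hcoeff]
  have h1 : ((-1 : ℝ)) ^ s * (-1) ^ s = 1 := by
    rw [← pow_add, ← two_mul, pow_mul]; norm_num
  rw [div_mul_eq_mul_div, div_eq_iff hs0]
  linear_combination ((s.factorial : ℝ) * A μ * esymm n (fun i => k i / (1 - μ * k i)) s) * h1
end

section
/- Let k₁,…,kₙ ∈ ℝ, μ ∈ ℝ with 1 − μkᵢ ≠ 0 for all i. Set kᵢ* = kᵢ/(1 − μkᵢ), H_r = C(n,r)⁻¹ e_r(k₁,…,kₙ), H_s* = C(n,s)⁻¹ e_s(k₁*,…,kₙ*), and A = ∏ᵢ(1 − μkᵢ). Then for each 0 ≤ s ≤ n: H_s* = (−1)^s/(s!·C(n,s)·A) · ∑_{r=s}^{n} (−1)^r · (r!/(r−s)!) · C(n,r) · H_r · μ^{r−s}. -/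
open Polynomial Finset

lemma esymm_eq_zero (n : ℕ) (k : Fin n → ℝ) (r : ℕ) (h : n < r) : esymm n k r = 0 := by
  unfold esymm
  rw [Finset.powersetCard_eq_empty.mpr (by simpa using h), Finset.sum_empty]

lemma coeff_prod_linear (n : ℕ) (k : Fin n → ℝ) (r : ℕ) :
    (∏ i, (C (k i) * X + 1) : ℝ[X]).coeff r = esymm n k r := by
  rw [Finset.prod_add]
  simp only [Finset.prod_const_one, mul_one, Finset.prod_mul_distrib, Finset.prod_const,
    ← map_prod, finset_sum_coeff, coeff_C_mul, coeff_X_pow]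
  unfold esymm
  rw [Finset.powersetCard_eq_filter, Finset.sum_filter]
  refine Finset.sum_congr rfl fun t _ => ?_
  by_cases h : t.card = r
  · simp [h]
  · rw [if_neg (fun hh => h hh.symm), if_neg h, mul_zero]

lemma natDegree_prod_linear_le (n : ℕ) (k : Fin n → ℝ) :
    (∏ i, (C (k i) * X + 1) : ℝ[X]).natDegree ≤ n := by
  refine le_trans (Polynomial.natDegree_prod_le _ _) ?_
  calc ∑ i : Fin n, (C (k i) * X + 1 : ℝ[X]).natDegree
      ≤ ∑ _i : Fin n, 1 := Finset.sum_le_sum fun i _ => by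
        simpa using Polynomial.natDegree_linear_le (a := k i) (b := (1:ℝ))
    _ = n := by simp

theorem key (n : ℕ) (k : Fin n → ℝ) (μ : ℝ)
    (hμ : ∀ i, 1 - μ * k i ≠ 0)
    (kstar : Fin n → ℝ) (hks : ∀ i, kstar i = k i / (1 - μ * k i))
    (A : ℝ) (hA : A = ∏ i, (1 - μ * k i)) (s : ℕ) :
    A * esymm n kstar s =
      ∑ r ∈ Finset.Icc s n, (r.choose s : ℝ) * esymm n k r * (-μ) ^ (r - s) := by
  have hpoly : (C A : ℝ[X]) * ∏ i, (C (kstar i) * X + 1) =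
      (∏ i, (C (k i) * X + 1) : ℝ[X]).comp (X - C μ) := by
    rw [hA, map_prod, ← Finset.prod_mul_distrib, Polynomial.prod_comp]
    refine Finset.prod_congr rfl fun i _ => ?_
    have h1 : (1 - μ * k i) * kstar i = k i := by
      rw [hks, mul_comm, div_mul_cancel₀ _ (hμ i)]
    simp only [add_comp, mul_comp, X_comp, C_comp, one_comp]
    rw [mul_add, mul_one, ← mul_assoc, ← map_mul, h1]
    rw [map_sub, map_one, map_mul]
    ring
  have hcoeff : A * esymm n kstar s = ((∏ i, (C (k i) * X + 1) : ℝ[X]).comp (X - C μ)).coeff s := by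
    rw [← hpoly, coeff_C_mul, coeff_prod_linear]
  rw [hcoeff]
  have hX : (X - C μ : ℝ[X]) = X + C (-μ) := by rw [map_neg, sub_eq_add_neg]
  rw [hX, ← Polynomial.taylor_apply, Polynomial.taylor_coeff]
  have hdeg : ((Polynomial.hasseDeriv s) (∏ i, (C (k i) * X + 1) : ℝ[X])).natDegree < n + 1 := by
    have := Polynomial.natDegree_hasseDeriv_le (∏ i, (C (k i) * X + 1) : ℝ[X]) s
    have h2 := natDegree_prod_linear_le n k
    omega
  rw [Polynomial.eval_eq_sum_range' hdeg]
  simp only [Polynomial.hasseDeriv_coeff, coeff_prod_linear]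
  -- RHS: reindex Icc s n
  have hz : ∀ r ∈ Finset.Icc s (n + s), r ∉ Finset.Icc s n →
      (r.choose s : ℝ) * esymm n k r * (-μ) ^ (r - s) = 0 := by
    intro r hr hr'
    simp only [Finset.mem_Icc] at hr hr'
    rw [esymm_eq_zero n k r (by omega)]
    ring
  rw [Finset.sum_subset (Finset.Icc_subset_Icc_right (by omega : n ≤ n + s)) hz]
  rw [show Finset.Icc s (n + s) = Finset.Ico s (n + s + 1) by rw [Finset.Ico_add_one_right_eq_Icc],
    Finset.sum_Ico_eq_sum_range]
  have : n + s + 1 - s = n + 1 := by omega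
  rw [this]
  refine Finset.sum_congr rfl fun m hm => ?_
  rw [add_comm s m]
  congr 2
  omega

theorem parallel_mean_curvature_functions (n : ℕ) (k : Fin n → ℝ) (μ : ℝ)
    (hμ : ∀ i, 1 - μ * k i ≠ 0)
    (kstar : Fin n → ℝ) (hks : ∀ i, kstar i = k i / (1 - μ * k i))
    (H Hstar : ℕ → ℝ)
    (hH : ∀ r, H r = ((n.choose r : ℝ))⁻¹ * esymm n k r)
    (hHs : ∀ s, Hstar s = ((n.choose s : ℝ))⁻¹ * esymm n kstar s)
    (A : ℝ) (hA : A = ∏ i, (1 - μ * k i))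
    (s : ℕ) (hsn : s ≤ n) :
    Hstar s = (-1 : ℝ) ^ s / (s.factorial * (n.choose s : ℝ) * A) *
      ∑ r ∈ Finset.Icc s n,
        (-1 : ℝ) ^ r * ((r.factorial : ℝ) / ((r - s).factorial : ℝ)) *
          (n.choose r : ℝ) * H r * μ ^ (r - s) := by
  have hAne : A ≠ 0 := by
    rw [hA]; exact Finset.prod_ne_zero_iff.mpr fun i _ => hμ i
  have hcs : ((n.choose s : ℝ)) ≠ 0 := Nat.cast_ne_zero.mpr (Nat.choose_pos hsn).ne'
  have hkey := key n k μ hμ kstar hks A hA s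
  have hL : Hstar s = ((n.choose s : ℝ))⁻¹ * A⁻¹ *
      ∑ r ∈ Finset.Icc s n, (r.choose s : ℝ) * esymm n k r * (-μ) ^ (r - s) := by
    rw [hHs, ← hkey]; field_simp
  rw [hL, Finset.mul_sum, Finset.mul_sum]
  refine Finset.sum_congr rfl fun r hr => ?_
  simp only [Finset.mem_Icc] at hr
  obtain ⟨hsr, hrn⟩ := hr
  have hcr : ((n.choose r : ℝ)) ≠ 0 := Nat.cast_ne_zero.mpr (Nat.choose_pos hrn).ne'
  rw [hH]
  have hcast : (r.choose s : ℝ) = r.factorial / (s.factorial * (r - s).factorial) :=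
    Nat.cast_choose ℝ hsr
  have hsgn : (-1 : ℝ) ^ r = (-1) ^ s * (-1) ^ (r - s) := by
    rw [← pow_add]; congr 1; omega
  have hnm : (-μ : ℝ) ^ (r - s) = (-1) ^ (r - s) * μ ^ (r - s) := by
    rw [neg_pow]
  have hsf : ((s.factorial : ℝ)) ≠ 0 := Nat.cast_ne_zero.mpr s.factorial_ne_zero
  have hrsf : (((r - s).factorial : ℝ)) ≠ 0 := Nat.cast_ne_zero.mpr (r - s).factorial_ne_zero
  rw [hcast, hsgn, hnm]
  have hss : ((-1:ℝ)) ^ s * (-1) ^ s = 1 := by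
    rw [← pow_add, ← two_mul, pow_mul]; norm_num
  field_simp
  linear_combination (-(esymm n k r * μ ^ (r - s))) * hss
end

section
/- Let k₁,…,kₙ ∈ ℝ, μ ∈ ℝ with 1 − μkᵢ ≠ 0 for all i, kᵢ* = kᵢ/(1 − μkᵢ), A = ∏ᵢ(1 − μkᵢ), and H_r = C(n,r)⁻¹ e_r(k). Then the mean H* = (1/n)∑ᵢ kᵢ* satisfies H* = (1/(n·A)) · ∑_{r=1}^{n} (−1)^{r+1} · r · C(n,r) · H_r · μ^{r−1}. -/
open Finset in
lemma sigma_swap_aux (n : ℕ) (F : Finset (Fin n) → ℝ) :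
    ∑ i : Fin n, ∑ t ∈ ((univ : Finset (Fin n)).erase i).powerset, F (insert i t)
      = ∑ S ∈ (univ : Finset (Fin n)).powerset, (S.card : ℝ) * F S := by
  rw [Finset.sum_sigma' Finset.univ (fun i => ((Finset.univ : Finset (Fin n)).erase i).powerset) (fun i t => F (insert i t))]
  have h2 : ∑ S ∈ (univ : Finset (Fin n)).powerset, (S.card : ℝ) * F S
      = ∑ y ∈ (univ : Finset (Fin n)).powerset.sigma (fun S => S), F y.1 := by
    rw [Finset.sum_sigma]
    exact Finset.sum_congr rfl fun S _ => by simp [Finset.sum_const, nsmul_eq_mul]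
  rw [h2]
  refine Finset.sum_nbij' (fun x => ⟨insert x.1 x.2, x.1⟩)
    (fun y => ⟨y.2, y.1.erase y.2⟩) ?_ ?_ ?_ ?_ ?_
  · rintro ⟨i, t⟩ hx
    simp only [Finset.mem_sigma, Finset.mem_powerset] at hx ⊢
    exact ⟨Finset.subset_univ _, Finset.mem_insert_self _ _⟩
  · rintro ⟨S, i⟩ hy
    simp only [Finset.mem_sigma, Finset.mem_powerset, Finset.mem_univ, true_and] at hy ⊢
    intro j hj
    simp only [Finset.mem_erase] at hj ⊢
    exact ⟨hj.1, Finset.mem_univ j⟩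
  · rintro ⟨i, t⟩ hx
    simp only [Finset.mem_sigma, Finset.mem_powerset, Finset.mem_univ, true_and] at hx
    have hi : i ∉ t := fun h => (Finset.mem_erase.1 (hx h)).1 rfl
    simp [Finset.erase_insert hi]
  · rintro ⟨S, i⟩ hy
    simp only [Finset.mem_sigma, Finset.mem_powerset] at hy
    simp [Finset.insert_erase hy.2]
  · rintro ⟨i, t⟩ _
    rfl

open Finset in
lemma key_identity (n : ℕ) (k : Fin n → ℝ) (μ : ℝ) :
    ∑ i : Fin n, k i * ∏ j ∈ (univ : Finset (Fin n)).erase i, (1 - μ * k j)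
      = ∑ r ∈ Icc 1 n, (-1 : ℝ) ^ (r + 1) * r * esymm n k r * μ ^ (r - 1) := by
  have h1 : ∀ i : Fin n, ∏ j ∈ (univ : Finset (Fin n)).erase i, (1 - μ * k j)
      = ∑ t ∈ ((univ : Finset (Fin n)).erase i).powerset, (-μ) ^ t.card * ∏ j ∈ t, k j := by
    intro i
    have : ∀ j : Fin n, (1 : ℝ) - μ * k j = (-μ) * k j + 1 := fun j => by ring
    rw [Finset.prod_congr rfl fun j _ => this j, Finset.prod_add]
    refine Finset.sum_congr rfl fun t _ => ?_
    rw [Finset.prod_mul_distrib, Finset.prod_const, Finset.prod_const_one, mul_one]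
  calc ∑ i : Fin n, k i * ∏ j ∈ (univ : Finset (Fin n)).erase i, (1 - μ * k j)
      = ∑ i : Fin n, ∑ t ∈ ((univ : Finset (Fin n)).erase i).powerset,
          (-μ) ^ ((insert i t).card - 1) * ∏ j ∈ insert i t, k j := by
        refine Finset.sum_congr rfl fun i _ => ?_
        rw [h1 i, Finset.mul_sum]
        refine Finset.sum_congr rfl fun t ht => ?_
        have hi : i ∉ t := fun h =>
          (Finset.mem_erase.1 (Finset.mem_powerset.1 ht h)).1 rfl
        rw [Finset.card_insert_of_notMem hi, Nat.add_sub_cancel,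
          Finset.prod_insert hi]
        ring
    _ = ∑ S ∈ (univ : Finset (Fin n)).powerset,
          (S.card : ℝ) * ((-μ) ^ (S.card - 1) * ∏ j ∈ S, k j) :=
        sigma_swap_aux n (fun S => (-μ) ^ (S.card - 1) * ∏ j ∈ S, k j)
    _ = ∑ r ∈ Finset.range (n + 1), ∑ S ∈ Finset.powersetCard r (univ : Finset (Fin n)),
          (S.card : ℝ) * ((-μ) ^ (S.card - 1) * ∏ j ∈ S, k j) := by
        rw [Finset.sum_powerset]
        simp
    _ = ∑ r ∈ Finset.range (n + 1), (r : ℝ) * ((-μ) ^ (r - 1) * esymm n k r) := by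
        refine Finset.sum_congr rfl fun r _ => ?_
        rw [esymm, Finset.mul_sum, Finset.mul_sum]
        refine Finset.sum_congr rfl fun S hS => ?_
        rw [(Finset.mem_powersetCard.1 hS).2]
    _ = ∑ r ∈ Icc 1 n, (-1 : ℝ) ^ (r + 1) * r * esymm n k r * μ ^ (r - 1) := by
        rw [Finset.sum_range_succ']
        have hIcc : ∑ r ∈ Icc 1 n, (-1 : ℝ) ^ (r + 1) * r * esymm n k r * μ ^ (r - 1)
            = ∑ i ∈ Finset.range n, (-1 : ℝ) ^ (1 + i + 1) * (1 + i) * esymm n k (1 + i) * μ ^ (1 + i - 1) := by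
          rw [← Finset.Ico_add_one_right_eq_Icc, Finset.sum_Ico_eq_sum_range]
          simp
        rw [hIcc]
        simp only [Nat.cast_zero, zero_mul, add_zero]
        refine Finset.sum_congr rfl fun i _ => ?_
        have : (1 : ℕ) + i = i + 1 := by ring
        rw [this]
        simp only [Nat.add_sub_cancel, Nat.cast_add, Nat.cast_one]
        rw [neg_pow μ i]
        ring

theorem parallel_relative_mean_curvature (n : ℕ) (k : Fin n → ℝ) (μ : ℝ)
    (hμ : ∀ i, 1 - μ * k i ≠ 0)
    (kstar : Fin n → ℝ) (hks : ∀ i, kstar i = k i / (1 - μ * k i))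
    (A : ℝ) (hA : A = ∏ i, (1 - μ * k i))
    (H : ℕ → ℝ) (hH : ∀ r, H r = ((n.choose r : ℝ))⁻¹ * esymm n k r)
    (Hstar : ℝ) (hHstar : Hstar = (n : ℝ)⁻¹ * ∑ i, kstar i) :
    Hstar = (1 / (n * A)) *
      ∑ r ∈ Finset.Icc 1 n,
        (-1 : ℝ) ^ (r + 1) * r * (n.choose r : ℝ) * H r * μ ^ (r - 1) := by
  have hAne : A ≠ 0 := by
    rw [hA]
    exact Finset.prod_ne_zero_iff.2 fun i _ => hμ i
  have hsum : A * ∑ i, kstar i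
      = ∑ i : Fin n, k i * ∏ j ∈ (Finset.univ : Finset (Fin n)).erase i, (1 - μ * k j) := by
    rw [Finset.mul_sum]
    refine Finset.sum_congr rfl fun i _ => ?_
    rw [hks i, hA, ← Finset.mul_prod_erase Finset.univ _ (Finset.mem_univ i)]
    field_simp [hμ i]
  have hRHS : ∑ r ∈ Finset.Icc 1 n,
        (-1 : ℝ) ^ (r + 1) * r * (n.choose r : ℝ) * H r * μ ^ (r - 1)
      = ∑ r ∈ Finset.Icc 1 n, (-1 : ℝ) ^ (r + 1) * r * esymm n k r * μ ^ (r - 1) := by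
    refine Finset.sum_congr rfl fun r hr => ?_
    have hrn : r ≤ n := (Finset.mem_Icc.1 hr).2
    have hc : (n.choose r : ℝ) ≠ 0 := Nat.cast_ne_zero.2 (Nat.choose_pos hrn).ne'
    rw [hH r]
    field_simp
  have hkey := key_identity n k μ
  rw [hHstar, hRHS, ← hkey, ← hsum]
  field_simp [hAne]
end
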